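/- Syntactic correspondence for the CEK machine: for any closed term t of the pure lambda-calculus, the closure t[∅] of the λρ̂-calculus evaluates to a value v under the reduction-based evaluation function (iterated left-to-right applicative-order one-step reduction with the contraction rules Var, Beta, Prop) if and only if the CEK machine, started in configuration ⟨t, ∅, []⟩_eval, halts with the value v (identifying closures (λx.t)[s] with CEK closures [x, t, s]). -/

import Mathlib

/-- Terms of the pure λ-calculus. -/
inductive Tm : Type
  | var : String → Tm
  | lam : String → Tm → Tm
  | app : Tm → Tm → Tm

mutual
  /-- Closures of the λρ̂-calculus: c ::= t[s] | c c. -/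
  inductive Clo : Type
    | sub : Tm → Subst → Clo
    | app : Clo → Clo → Clo
  /-- Values: v ::= (λx.t)[s]. -/
  inductive Val : Type
    | clos : String → Tm → Subst → Val
  /-- Explicit substitutions. -/
  inductive Subst : Type
    | empty : Subst
    | ext : String → Val → Subst → Subst
  /-- Left-to-right applicative-order reduction contexts:
  C ::= [] | C[[] c] | C[v []]. -/
  inductive Ctx : Type
    | hole : Ctx
    | arg : Ctx → Clo → Ctx
    | fnv : Ctx → Val → Ctx
end

/-- The syntactic coercion ↑ mapping a value into a closure. -/
def upv : Val → Clo
  | .clos x t s => .sub (.lam x t) s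

/-- Lookup in an explicit substitution. -/
def lookup (x : String) : Subst → Option Val
  | .empty => none
  | .ext y v s => if x = y then some v else lookup x s

/-- Potential redexes: r ::= x[s] | v v | (t0 t1)[s]. -/
inductive Red : Type
  | var : String → Subst → Red
  | app : Val → Val → Red
  | prop : Tm → Tm → Subst → Red

/-- The coercion mapping a potential redex to the closure it stands for. -/
def upr : Red → Clo
  | .var x s => .sub (.var x) s
  | .app v0 v1 => .app (upv v0) (upv v1)
  | .prop t0 t1 s => .sub (.app t0 t1) s

/-- Plugging a closure into a reduction context (a total function). -/
def plug : Ctx → Clo → Clo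
  | .hole, c => c
  | .arg C c1, c0 => plug C (.app c0 c1)
  | .fnv C v0, c1 => plug C (.app (upv v0) c1)

/-- States of the decomposition transition system. -/
inductive DConf : Type
  | clos : Clo → Ctx → DConf
  | cont : Ctx → Val → DConf
  | val : Val → DConf
  | dec : Red → Ctx → DConf

/-- The decomposition transition system of the λρ̂-calculus, for
left-to-right applicative order: it maps a value closure to VAL(v) and a
non-value closure to DEC(r,C) where r is the left-to-right innermost
potential redex and C the surrounding context. -/
inductive DStep : DConf → DConf → Prop
  | varsub (x : String) (s : Subst) (C : Ctx) :
      DStep (.clos (.sub (.var x) s) C) (.dec (.var x s) C)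
  | lamsub (x : String) (t : Tm) (s : Subst) (C : Ctx) :
      DStep (.clos (.sub (.lam x t) s) C) (.cont C (.clos x t s))
  | appsub (t0 t1 : Tm) (s : Subst) (C : Ctx) :
      DStep (.clos (.sub (.app t0 t1) s) C) (.dec (.prop t0 t1 s) C)
  | app (c0 c1 : Clo) (C : Ctx) :
      DStep (.clos (.app c0 c1) C) (.clos c0 (.arg C c1))
  | conthole (v : Val) : DStep (.cont .hole v) (.val v)
  | contarg (C : Ctx) (c1 : Clo) (v0 : Val) :
      DStep (.cont (.arg C c1) v0) (.clos c1 (.fnv C v0))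
  | contfnv (C : Ctx) (v0 v1 : Val) :
      DStep (.cont (.fnv C v0) v1) (.dec (.app v0 v1) C)

/-- The context-insensitive contraction rules Var, Beta and Prop of the
λρ̂-calculus. -/
inductive Contract : Red → Clo → Prop
  | var (x : String) (s : Subst) (v : Val) :
      lookup x s = some v → Contract (.var x s) (upv v)
  | beta (x : String) (t : Tm) (s : Subst) (v : Val) :
      Contract (.app (.clos x t s) v) (.sub t (.ext x v s))
  | prop (t0 t1 : Tm) (s : Subst) :
      Contract (.prop t0 t1 s) (.app (.sub t0 s) (.sub t1 s))

/-- One-step left-to-right applicative-order reduction: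
decompose, contract, plug. -/
def Reduce (c c' : Clo) : Prop :=
  ∃ r C c₀,
    Relation.ReflTransGen DStep (.clos c .hole) (.dec r C) ∧
    Contract r c₀ ∧
    plug C c₀ = c'

/-- Evaluation contexts of the CEK machine. -/
inductive MCtx : Type
  | END : MCtx
  | ARG : Tm → Subst → MCtx → MCtx
  | FUN : Val → MCtx → MCtx

/-- Configurations of the CEK machine, identifying calculus closures
(λx.t)[s] with CEK closures [x,t,s]. -/
inductive CekConf : Type
  | eval : Tm → Subst → MCtx → CekConf
  | cont : MCtx → Val → CekConf
  | done : Val → CekConf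

/-- The CEK machine. -/
inductive CekStep : CekConf → CekConf → Prop
  | var (x : String) (e : Subst) (v : Val) (C : MCtx) :
      lookup x e = some v → CekStep (.eval (.var x) e C) (.cont C v)
  | lam (x : String) (t : Tm) (e : Subst) (C : MCtx) :
      CekStep (.eval (.lam x t) e C) (.cont C (.clos x t e))
  | app (t0 t1 : Tm) (e : Subst) (C : MCtx) :
      CekStep (.eval (.app t0 t1) e C) (.eval t0 e (.ARG t1 e C))
  | contEnd (v : Val) : CekStep (.cont .END v) (.done v)
  | contArg (t : Tm) (e : Subst) (C : MCtx) (v : Val) :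
      CekStep (.cont (.ARG t e C) v) (.eval t e (.FUN v C))
  | contFun (x : String) (t : Tm) (e : Subst) (C : MCtx) (v : Val) :
      CekStep (.cont (.FUN (.clos x t e) C) v) (.eval t (.ext x v e) C)


/-! ### Auxiliary development -/

/-- The refocused machine: decomposition steps plus contraction at dec states. -/
inductive RStep : DConf → DConf → Prop
  | ds {a b : DConf} : DStep a b → RStep a b
  | cs {r : Red} {c₀ : Clo} {C : Ctx} : Contract r c₀ → RStep (.dec r C) (.clos c₀ C)

theorem dstep_det {a b c : DConf} (h1 : DStep a b) (h2 : DStep a c) : b = c := by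
  cases h1 <;> cases h2 <;> rfl

theorem contract_det {r : Red} {c c' : Clo} (h1 : Contract r c) (h2 : Contract r c') :
    c = c' := by
  cases h1 <;> cases h2 <;> simp_all

theorem rstep_det {a b c : DConf} (h1 : RStep a b) (h2 : RStep a c) : b = c := by
  cases h1 with
  | ds h1 =>
    cases h2 with
    | ds h2 => exact dstep_det h1 h2
    | cs h2 => cases h1
  | cs h1 =>
    cases h2 with
    | ds h2 => cases h2
    | cs h2 => rw [contract_det h1 h2]

theorem val_final {v : Val} {a : DConf} (h : RStep (.val v) a) : False := by
  cases h with
  | ds h => cases h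

theorem rtg_from_val {v : Val} {d : DConf} (h : Relation.ReflTransGen RStep (.val v) d) :
    d = .val v := by
  rcases h.cases_head with rfl | ⟨b, hb, _⟩
  · rfl
  · exact absurd hb val_final

/-- Decoding a decomposition configuration back to the closure it stands for. -/
def decode : DConf → Clo
  | .clos c C => plug C c
  | .cont C v => plug C (upv v)
  | .val v => upv v
  | .dec r C => plug C (upr r)

theorem dstep_decode {a b : DConf} (h : DStep a b) : decode a = decode b := by
  cases h <;> rfl

theorem dsteps_decode {a b : DConf} (h : Relation.ReflTransGen DStep a b) :
    decode a = decode b := by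
  induction h with
  | refl => rfl
  | tail _ h ih => exact ih.trans (dstep_decode h)

/-- Refocusing: decomposing `plug C c` from scratch passes through `⟨c, C⟩`. -/
theorem refocus : ∀ (C : Ctx) (c : Clo),
    Relation.ReflTransGen DStep (.clos (plug C c) .hole) (.clos c C)
  | .hole, _ => .refl
  | .arg C c1, c0 => (refocus C (.app c0 c1)).tail (.app c0 c1 C)
  | .fnv C v0, c1 => by
      obtain ⟨x, t, s⟩ := v0
      exact (((refocus C (.app (.sub (.lam x t) s) c1)).tail
        (.app _ _ _)).tail (.lamsub x t s _)).tail (.contarg C c1 _)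

theorem det_rtg {α : Type*} {R : α → α → Prop}
    (det : ∀ a b c : α, R a b → R a c → b = c) {a b : α}
    (h1 : Relation.ReflTransGen R a b) :
    ∀ c, Relation.ReflTransGen R a c →
      Relation.ReflTransGen R b c ∨ Relation.ReflTransGen R c b := by
  induction h1 using Relation.ReflTransGen.head_induction_on with
  | refl => intro c h2; left; exact h2
  | head hab h ih =>
    intro c h2
    rcases h2.cases_head with rfl | ⟨d, hd, h2h⟩
    · right; exact Relation.ReflTransGen.head hab h
    · cases det _ _ _ hab hd; exact ih _ h2h

/-- Length-indexed chains. -/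
inductive LPath {α : Type*} (R : α → α → Prop) : ℕ → α → α → Prop
  | refl {a} : LPath R 0 a a
  | step {a b c n} : R a b → LPath R n b c → LPath R (n+1) a c

theorem rtg_exists_lpath {α : Type*} {R : α → α → Prop} {a b : α}
    (h : Relation.ReflTransGen R a b) : ∃ n, LPath R n a b := by
  induction h using Relation.ReflTransGen.head_induction_on with
  | refl => exact ⟨0, .refl⟩
  | head hab _ ih => obtain ⟨n, hp⟩ := ih; exact ⟨n+1, .step hab hp⟩

/-- Chains counting only contraction steps. -/
inductive RPath : ℕ → DConf → DConf → Prop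
  | refl {a} : RPath 0 a a
  | dstep {a b c n} : DStep a b → RPath n b c → RPath n a c
  | cstep {r c₀ C d n} : Contract r c₀ → RPath n (.clos c₀ C) d →
      RPath (n+1) (.dec r C) d

theorem rstep_rtg_exists_rpath {a b : DConf} (h : Relation.ReflTransGen RStep a b) :
    ∃ n, RPath n a b := by
  induction h using Relation.ReflTransGen.head_induction_on with
  | refl => exact ⟨0, .refl⟩
  | head hab _ ih =>
    obtain ⟨n, hp⟩ := ih
    cases hab with
    | ds h => exact ⟨n, .dstep h hp⟩
    | cs h => exact ⟨n+1, .cstep h hp⟩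

theorem rpath_prepend {a b d : DConf} {n : ℕ}
    (h : Relation.ReflTransGen DStep a b) (hp : RPath n b d) : RPath n a d := by
  induction h using Relation.ReflTransGen.head_induction_on with
  | refl => exact hp
  | head hab _ ih => exact .dstep hab ih

theorem rpath_val {n : ℕ} {a d : DConf} (h : RPath n a d) :
    ∀ v : Val, d = .val v →
      (n = 0 ∧ Relation.ReflTransGen DStep a d) ∨
      (∃ r C c₀ k, n = k + 1 ∧ Relation.ReflTransGen DStep a (.dec r C) ∧
        Contract r c₀ ∧ RPath k (.clos c₀ C) d) := by
  induction h with
  | refl => intro v hv; exact Or.inl ⟨rfl, .refl⟩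
  | dstep hab hp ih =>
    intro v hv
    rcases ih v hv with ⟨rfl, hd⟩ | ⟨r, C, c₀, k, rfl, hd, hc, hp⟩
    · exact Or.inl ⟨rfl, .head hab hd⟩
    · exact Or.inr ⟨r, C, c₀, k, rfl, .head hab hd, hc, hp⟩
  | cstep hc hp _ =>
    intro v hv
    exact Or.inr ⟨_, _, _, _, rfl, .refl, hc, hp⟩

theorem reduce_rtg_to_rstep {c : Clo} {v : Val}
    (h : Relation.ReflTransGen Reduce c (upv v)) :
    Relation.ReflTransGen RStep (.clos c .hole) (.val v) := by
  induction h using Relation.ReflTransGen.head_induction_on with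
  | refl =>
    obtain ⟨x, t, s⟩ := v
    exact (Relation.ReflTransGen.single (.ds (.lamsub x t s .hole))).tail
      (.ds (.conthole _))
  | head hab _ ih =>
    obtain ⟨r, C, c₀, hdec, hcon, hplug⟩ := hab
    have h1 : Relation.ReflTransGen RStep (.clos _ .hole) (.clos c₀ C) :=
      (Relation.ReflTransGen.mono (r := DStep) (p := RStep) (fun _ _ h => RStep.ds h) _ _ hdec).tail (.cs hcon)
    have h2 : Relation.ReflTransGen RStep (.clos _ .hole) (.clos c₀ C) :=
      Relation.ReflTransGen.mono (r := DStep) (p := RStep) (fun _ _ h => RStep.ds h) _ _ (hplug ▸ refocus C c₀)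
    rcases det_rtg (R := RStep) (fun _ _ _ => rstep_det) h2 _ ih with h3 | h3
    · exact h1.trans h3
    · cases rtg_from_val h3

theorem rstep_to_reduce : ∀ n : ℕ, ∀ {c : Clo} {v : Val},
    RPath n (.clos c .hole) (.val v) → Relation.ReflTransGen Reduce c (upv v) := by
  intro n
  induction n using Nat.strong_induction_on with
  | _ n ih =>
    intro c v h
    rcases rpath_val h v rfl with ⟨_, hd⟩ | ⟨r, C, c₀, k, rfl, hd, hc, hp⟩
    · have hdec := dsteps_decode hd
      simp only [decode, plug] at hdec
      rw [hdec]
    · have hred : Reduce c (plug C c₀) := ⟨r, C, c₀, hd, hc, rfl⟩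
      have hpp : RPath k (.clos (plug C c₀) .hole) (.val v) :=
        rpath_prepend (refocus C c₀) hp
      exact Relation.ReflTransGen.head hred (ih k (Nat.lt_succ_self k) hpp)

/-- Translation of CEK contexts to reduction contexts. -/
def tctx : MCtx → Ctx
  | .END => .hole
  | .ARG t e C => .arg (tctx C) (.sub t e)
  | .FUN v C => .fnv (tctx C) v

/-- Translation of CEK configurations to decomposition configurations. -/
def tconf : CekConf → DConf
  | .eval t e C => .clos (.sub t e) (tctx C)
  | .cont C v => .cont (tctx C) v
  | .done v => .val v

theorem cek_sim {k kk : CekConf} (h : CekStep k kk) :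
    Relation.ReflTransGen RStep (tconf k) (tconf kk) := by
  cases h with
  | var x e v C hl =>
    obtain ⟨y, t, s⟩ := v
    exact ((Relation.ReflTransGen.single (.ds (.varsub x e (tctx C)))).tail
      (.cs (.var x e _ hl))).tail (.ds (.lamsub y t s _))
  | lam x t e C => exact .single (.ds (.lamsub x t e _))
  | app t0 t1 e C =>
    exact ((Relation.ReflTransGen.single (.ds (.appsub t0 t1 e _))).tail
      (.cs (.prop t0 t1 e))).tail (.ds (.app _ _ _))
  | contEnd v => exact .single (.ds (.conthole v))
  | contArg t e C v => exact .single (.ds (.contarg _ _ _))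
  | contFun x t e C v =>
    exact (Relation.ReflTransGen.single (.ds (.contfnv _ _ _))).tail
      (.cs (.beta x t e v))

theorem cek_rtg_sim {k kk : CekConf} (h : Relation.ReflTransGen CekStep k kk) :
    Relation.ReflTransGen RStep (tconf k) (tconf kk) := by
  induction h with
  | refl => exact .refl
  | tail _ h ih => exact ih.trans (cek_sim h)

theorem rstep_to_cek : ∀ n : ℕ, ∀ {k : CekConf} {v : Val},
    LPath RStep n (tconf k) (.val v) → Relation.ReflTransGen CekStep k (.done v) := by
  intro n
  induction n using Nat.strong_induction_on with
  | _ n ih =>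
    intro k v h
    cases k with
    | done w =>
      cases h with
      | refl => exact .refl
      | step h1 _ => exact absurd h1 val_final
    | eval t e C =>
      cases t with
      | var x =>
        cases h with
        | step h1 hp1 =>
          cases h1 with
          | ds hd =>
            cases hd
            cases hp1 with
            | step h2 hp2 =>
              cases h2 with
              | ds hd2 => cases hd2
              | cs hc =>
                cases hc with
                | var x e w hl =>
                  obtain ⟨y, tt, s⟩ := w
                  cases hp2 with
                  | step h3 hp3 =>
                    cases h3 with
                    | ds hd3 =>
                      cases hd3
                      exact Relation.ReflTransGen.head (.var x e _ C hl)
                        (ih _ (by omega) hp3)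
      | lam x tt =>
        cases h with
        | step h1 hp1 =>
          cases h1 with
          | ds hd =>
            cases hd
            exact Relation.ReflTransGen.head (.lam x tt e C) (ih _ (by omega) hp1)
      | app t0 t1 =>
        cases h with
        | step h1 hp1 =>
          cases h1 with
          | ds hd =>
            cases hd
            cases hp1 with
            | step h2 hp2 =>
              cases h2 with
              | ds hd2 => cases hd2
              | cs hc =>
                cases hc
                cases hp2 with
                | step h3 hp3 =>
                  cases h3 with
                  | ds hd3 =>
                    cases hd3
                    exact Relation.ReflTransGen.head (.app t0 t1 e C)
                      (ih _ (by omega) hp3)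
    | cont C w =>
      cases C with
      | END =>
        cases h with
        | step h1 hp1 =>
          cases h1 with
          | ds hd =>
            cases hd
            cases hp1 with
            | refl => exact .single (.contEnd _)
            | step h2 _ => exact absurd h2 val_final
      | ARG t e Cp =>
        cases h with
        | step h1 hp1 =>
          cases h1 with
          | ds hd =>
            cases hd
            exact Relation.ReflTransGen.head (.contArg t e Cp w) (ih _ (by omega) hp1)
      | FUN u Cp =>
        obtain ⟨x, tt, ee⟩ := u
        cases h with
        | step h1 hp1 =>
          cases h1 with
          | ds hd =>
            cases hd
            cases hp1 with
            | step h2 hp2 =>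
              cases h2 with
              | ds hd2 => cases hd2
              | cs hc =>
                cases hc
                exact Relation.ReflTransGen.head (.contFun x tt ee Cp w)
                  (ih _ (by omega) hp2)

/-- Syntactic correspondence for the CEK machine: for any closed term t, the
closure t[∅] evaluates to a value v under iterated one-step reduction iff the
CEK machine, started in ⟨t,∅,[]⟩_eval, halts with the value v. -/
theorem cek_syntactic_correspondence :
    ∀ (t : Tm) (v : Val),
      Relation.ReflTransGen Reduce (.sub t .empty) (upv v) ↔
      Relation.ReflTransGen CekStep (.eval t .empty .END) (.done v) := by
  intro t v
  constructor
  · intro h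
    obtain ⟨n, hp⟩ := rtg_exists_lpath (reduce_rtg_to_rstep h)
    exact rstep_to_cek n (k := .eval t .empty .END) hp
  · intro h
    have h1 : Relation.ReflTransGen RStep (.clos (.sub t .empty) .hole) (.val v) :=
      cek_rtg_sim h
    obtain ⟨n, hp⟩ := rstep_rtg_exists_rpath h1
    exact rstep_to_reduce n hp
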